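/- Let x₁,…,xₙ ∈ ℤ[i] and y = 2·∏_{k=1}^n (3xₖ+1). Then y + ∑_{k=1}^n xₖ/yᵏ ∈ ℚ if and only if x₁,…,xₙ are all rational integers. -/

import Mathlib

open GaussianInt Finset

noncomputable def Complex.abs : AbsoluteValue ℂ ℝ :=
  IsAbsoluteValue.toAbsoluteValue (norm : ℂ → ℝ)

lemma Complex.abs_apply' (z : ℂ) : Complex.abs z = ‖z‖ := rfl

lemma Complex.sq_abs' (z : ℂ) : Complex.abs z ^ 2 = Complex.normSq z := Complex.sq_norm z

lemma oneLeProd {ι : Type*} {s : Finset ι} {f : ι → ℝ} (h : ∀ i ∈ s, 1 ≤ f i) :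
    1 ≤ ∏ i ∈ s, f i := by
  calc (1:ℝ) = ∏ _i ∈ s, 1 := by simp
  _ ≤ ∏ i ∈ s, f i := Finset.prod_le_prod (by simp) h

lemma singleLeProd {ι : Type*} [Fintype ι] [DecidableEq ι] {f : ι → ℝ} (h : ∀ i, 1 ≤ f i) (k : ι) :
    f k ≤ ∏ i, f i := by
  rw [← Finset.mul_prod_erase Finset.univ f (Finset.mem_univ k)]
  exact le_mul_of_one_le_right (by linarith [h k]) (oneLeProd (fun i _ => h i))



lemma digitsZero (c : ℤ) (hc : c ≠ 0) :
    ∀ (n : ℕ) (d : ℕ → ℤ), (∀ j, |d j| < |c|) →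
      ∑ j ∈ Finset.range n, d j * c^j = 0 → ∀ j < n, d j = 0 := by
  intro n
  induction n with
  | zero => intro d _ _ j hj; omega
  | succ m ih =>
    intro d hd hsum j hj
    rw [Finset.sum_range_succ' (fun j => d j * c^j)] at hsum
    have h : ∑ j ∈ Finset.range m, d (j+1) * c^(j+1)
        = c * ∑ j ∈ Finset.range m, d (j+1) * c^j := by
      rw [Finset.mul_sum]; congr 1; ext k; ring
    rw [h] at hsum
    simp only [pow_zero, mul_one] at hsum
    have hdvd : c ∣ d 0 := ⟨-∑ j ∈ Finset.range m, d (j+1) * c^j, by linarith⟩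
    have hd0 : d 0 = 0 := by
      rcases eq_or_ne (d 0) 0 with h0 | h0
      · exact h0
      · have := Int.le_of_dvd (abs_pos.mpr h0) ((abs_dvd _ _).mpr ((dvd_abs _ _).mpr hdvd))
        have := hd 0
        omega
    rcases Nat.eq_zero_or_pos j with rfl | hjp
    · exact hd0
    · have hs : ∑ j ∈ Finset.range m, d (j+1) * c^j = 0 := by
        rcases mul_eq_zero.mp (by linarith : c * ∑ j ∈ Finset.range m, d (j+1) * c^j = 0) with h | h
        · exact absurd h hc
        · exact h
      have := ih (fun j => d (j+1)) (fun j => hd (j+1)) hs (j-1) (by omega)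
      simpa [Nat.sub_add_cancel hjp] using this


/-- Let `x₁,…,xₙ ∈ ℤ[i]` and `y = 2·∏ (3xₖ+1)`. Then `y + ∑ xₖ/yᵏ ∈ ℚ` (inside
`ℚ(i) ⊆ ℂ`) if and only if `x₁,…,xₙ` are all rational integers. -/
theorem gaussian_add_sum_mem_rat_iff (n : ℕ) (x : Fin n → GaussianInt)
    (y : GaussianInt) (hy : y = 2 * ∏ k, (3 * x k + 1)) :
    (∃ q : ℚ, GaussianInt.toComplex y
        + ∑ k, GaussianInt.toComplex (x k) / (GaussianInt.toComplex y) ^ ((k : ℕ) + 1)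
        = (q : ℂ)) ↔ ∀ k, ∃ m : ℤ, x k = (m : GaussianInt) := by
  constructor
  · rintro ⟨q, hq⟩

    have hv0 : ∀ k, (3 * x k + 1) ≠ 0 := by
      intro k h
      have h2 : (3 * x k + 1).re = 3 * (x k).re + 1 := by
        simp [Zsqrtd.re_add, Zsqrtd.re_mul]
      rw [h] at h2
      simp at h2
      omega
    set u : GaussianInt := ∏ k, (3 * x k + 1) with hu
    have hu0 : u ≠ 0 := Finset.prod_ne_zero_iff.mpr (fun k _ => hv0 k)
    have hy0 : y ≠ 0 := by rw [hy]; exact mul_ne_zero (by decide) hu0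
    set Y : ℂ := toComplex y with hY
    have hY0 : Y ≠ 0 := by rwa [hY, Ne, toComplex_eq_zero]
    set R : ℝ := Complex.abs Y with hRdef
    have hR0 : 0 < R := by rw [hRdef]; exact AbsoluteValue.pos _ hY0
    -- 1 ≤ |toComplex z| for nonzero z
    have habs1 : ∀ z : GaussianInt, z ≠ 0 → 1 ≤ Complex.abs (toComplex z) := by
      intro z hz
      have h1 : (1:ℤ) ≤ z.norm := by
        rcases lt_or_eq_of_le (GaussianInt.norm_nonneg z) with h | h
        · omega
        · exact absurd ((Zsqrtd.norm_eq_zero_iff (by norm_num) z).mp h.symm) hz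
      have h2 : (1:ℝ) ≤ Complex.normSq (toComplex z) := by
        rw [← intCast_real_norm]; exact_mod_cast h1
      nlinarith [Complex.sq_abs' (toComplex z), AbsoluteValue.nonneg Complex.abs (toComplex z)]
    -- product formula for R
    have hYprod : Y = 2 * ∏ k, toComplex (3 * x k + 1) := by
      rw [hY, hy, map_mul, map_prod, map_ofNat]
    have hRprod : R = 2 * ∏ k, Complex.abs (toComplex (3 * x k + 1)) := by
      rw [hRdef, hYprod, map_mul, map_prod]; norm_num [Complex.abs_apply']
    have hR2 : 2 ≤ R := by
      rw [hRprod]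
      have : (1:ℝ) ≤ ∏ k, Complex.abs (toComplex (3 * x k + 1)) :=
        oneLeProd (fun k _ => habs1 _ (hv0 k))
      linarith
    have hVle : ∀ k, Complex.abs (toComplex (3 * x k + 1)) ≤ R / 2 := by
      intro k
      have := singleLeProd (f := fun k => Complex.abs (toComplex (3 * x k + 1)))
        (fun j => habs1 _ (hv0 j)) k
      rw [hRprod]; linarith
    have hXle : ∀ k, Complex.abs (toComplex (x k)) ≤ (R + 2) / 6 := by
      intro k
      have he : toComplex (3 * x k + 1) = 3 * toComplex (x k) + 1 := by rw [map_add, map_mul, map_one, map_ofNat]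
      have h3 : Complex.abs (3 * toComplex (x k)) ≤ Complex.abs (toComplex (3 * x k + 1)) + 1 := by
        rw [he]
        calc Complex.abs (3 * toComplex (x k)) = Complex.abs ((3 * toComplex (x k) + 1) + (-1)) := by
              ring_nf
          _ ≤ Complex.abs (3 * toComplex (x k) + 1) + Complex.abs (-1) := Complex.abs.add_le _ _
          _ = Complex.abs (3 * toComplex (x k) + 1) + 1 := by norm_num
      rw [map_mul] at h3
      have : Complex.abs (3:ℂ) = 3 := by norm_num [Complex.abs_apply']
      rw [this] at h3
      have := hVle k
      linarith
    have geomAux : ∀ r : ℝ, 0 ≤ r → r ≤ 1/2 →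
        ∀ m, ∑ k ∈ Finset.range m, r^(k+1) ≤ r / (1 - r) := by
      intro r h0 h2
      have hr1 : (0:ℝ) < 1 - r := by linarith
      intro m
      induction m with
      | zero => simp; positivity
      | succ m ih =>
        rw [Finset.sum_range_succ' (fun k => r^(k+1))]
        have h : ∑ k ∈ Finset.range m, r ^ (k + 1 + 1) = r * ∑ k ∈ Finset.range m, r ^ (k+1) := by
          rw [Finset.mul_sum]; congr 1; ext k; ring
        rw [h, le_div_iff₀ hr1] at *
        have hs : 0 ≤ ∑ k ∈ Finset.range m, r ^ (k+1) := by positivity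
        simp only [pow_one, zero_add]
        nlinarith
    have him : (Y.im : ℝ) + ∑ k, (toComplex (x k) / Y^((k:ℕ)+1)).im = 0 := by
      have h1 := congrArg Complex.im hq
      simpa [Complex.add_im, Complex.im_sum, Complex.ratCast_im] using h1
    have hterm : ∀ k : Fin n, |(toComplex (x k) / Y^((k:ℕ)+1)).im|
        ≤ ((R+2)/6) * (1/R)^((k:ℕ)+1) := by
      intro k
      calc |(toComplex (x k) / Y^((k:ℕ)+1)).im|
          ≤ Complex.abs (toComplex (x k) / Y^((k:ℕ)+1)) := Complex.abs_im_le_norm _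
        _ = Complex.abs (toComplex (x k)) * (1/R)^((k:ℕ)+1) := by
            rw [map_div₀, map_pow, ← hRdef, div_pow, one_pow, div_eq_mul_one_div]
        _ ≤ ((R+2)/6) * (1/R)^((k:ℕ)+1) :=
            mul_le_mul_of_nonneg_right (hXle k) (by positivity)
    have hgeom : ∑ k : Fin n, (1/R)^((k:ℕ)+1) ≤ (1/R) / (1 - 1/R) := by
      rw [Fin.sum_univ_eq_sum_range (fun k => (1/R)^(k+1))]
      refine geomAux (1/R) (by positivity) ?_ n
      rw [div_le_div_iff₀ hR0 (by norm_num)]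
      linarith
    have hsum : |∑ k, (toComplex (x k) / Y^((k:ℕ)+1)).im| ≤ ((R+2)/6) * ((1/R)/(1-1/R)) := by
      calc |∑ k, (toComplex (x k) / Y^((k:ℕ)+1)).im|
          ≤ ∑ k, |(toComplex (x k) / Y^((k:ℕ)+1)).im| := Finset.abs_sum_le_sum_abs _ _
        _ ≤ ∑ k : Fin n, ((R+2)/6) * (1/R)^((k:ℕ)+1) := Finset.sum_le_sum (fun k _ => hterm k)
        _ = ((R+2)/6) * ∑ k : Fin n, (1/R)^((k:ℕ)+1) := by rw [Finset.mul_sum]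
        _ ≤ _ := mul_le_mul_of_nonneg_left hgeom (by positivity)
    have hBlt : ((R+2)/6) * ((1/R)/(1-1/R)) < 2 := by
      have h1 : (0:ℝ) < 1 - 1/R := by
        have : 1/R ≤ 1/2 := by rw [div_le_div_iff₀ hR0 (by norm_num)]; linarith
        linarith
      have hR1 : (0:ℝ) < R - 1 := by linarith
      have hne : R ≠ 0 := ne_of_gt hR0
      have he : (R+2)/6 * (1/R/(1-1/R)) = (R+2)/(6*(R-1)) := by
        have h2 : 1 - 1/R = (R-1)/R := by field_simp
        rw [h2]
        field_simp
      rw [he, div_lt_iff₀ (by positivity)]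
      linarith
    -- Step A conclusion: y.im = 0
    have hyim : y.im = 0 := by
      by_contra h
      have hyim2 : y.im = 2 * u.im := by
        rw [hy, Zsqrtd.im_mul]
        norm_num
      have hu_im : u.im ≠ 0 := by
        intro h0; rw [h0, mul_zero] at hyim2; exact h hyim2
      have h2 : (2:ℤ) ≤ |y.im| := by
        rw [hyim2, abs_mul, abs_two]
        have := Int.one_le_abs hu_im
        linarith
      have h3 : (2:ℝ) ≤ |Y.im| := by
        have h4 : Y.im = ((y.im : ℤ) : ℝ) := (intCast_im y).symm
        rw [h4, ← Int.cast_abs]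
        exact_mod_cast h2
      have h5 : |Y.im| < 2 := by
        have heq : Y.im = -(∑ k : Fin n, (toComplex (x k) / Y^((k:ℕ)+1)).im) := by linarith
        rw [heq, abs_neg]
        linarith
      linarith
    -- Step B : base-c digits
    set c : ℤ := y.re with hc
    have hYreal : Y = ((c : ℤ) : ℂ) := by
      rw [hY, toComplex_def, hyim]
      simp [hc]
    have hcabs : |(c:ℝ)| = R := by
      rw [hRdef, hYreal]
      push_cast
      rw [Complex.abs_apply', Complex.norm_intCast]
    have hcne : (c:ℝ) ≠ 0 := by
      intro h0
      rw [h0, abs_zero] at hcabs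
      linarith
    have hcZne : c ≠ 0 := by exact_mod_cast fun h0 => hcne (by exact_mod_cast congrArg (Int.cast : ℤ → ℝ) h0)
    have hterm2 : ∀ k : Fin n, (toComplex (x k) / Y^((k:ℕ)+1)).im
        = ((x k).im : ℝ) / (c:ℝ)^((k:ℕ)+1) := by
      intro k
      rw [hYreal]
      rw [show ((c:ℤ):ℂ) = (((c:ℝ)):ℂ) by push_cast; ring]
      rw [← Complex.ofReal_pow, Complex.div_ofReal_im, intCast_im]
    have hsum0 : ∑ k : Fin n, ((x k).im : ℝ) / (c:ℝ)^((k:ℕ)+1) = 0 := by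
      have h4 : Y.im = ((y.im : ℤ) : ℝ) := (intCast_im y).symm
      rw [h4, hyim] at him
      simp only [Int.cast_zero, zero_add] at him
      rw [← him]
      exact Finset.sum_congr rfl (fun k _ => (hterm2 k).symm)
    have hpowsum : ∑ k : Fin n, ((x k).im : ℝ) * (c:ℝ)^(n - 1 - (k:ℕ)) = 0 := by
      have hstep : ∀ k : Fin n, ((x k).im : ℝ) * (c:ℝ)^(n - 1 - (k:ℕ))
          = (c:ℝ)^n * (((x k).im : ℝ) / (c:ℝ)^((k:ℕ)+1)) := by
        intro k
        have hlt := k.isLt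
        have hkn : (n - 1 - (k:ℕ)) + ((k:ℕ)+1) = n := by omega
        have hpow : (c:ℝ)^n = (c:ℝ)^(n - 1 - (k:ℕ)) * (c:ℝ)^((k:ℕ)+1) := by
          rw [← pow_add, hkn]
        rw [hpow]
        field_simp
      calc ∑ k : Fin n, ((x k).im : ℝ) * (c:ℝ)^(n - 1 - (k:ℕ))
          = ∑ k : Fin n, (c:ℝ)^n * (((x k).im : ℝ) / (c:ℝ)^((k:ℕ)+1)) :=
            Finset.sum_congr rfl (fun k _ => hstep k)
        _ = (c:ℝ)^n * ∑ k : Fin n, ((x k).im : ℝ) / (c:ℝ)^((k:ℕ)+1) := (Finset.mul_sum _ _ _).symm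
        _ = 0 := by rw [hsum0, mul_zero]
    set d : ℕ → ℤ := fun j => if h : j < n then (x ⟨n - 1 - j, by omega⟩).im else 0 with hd
    set g : ℕ → ℝ := fun m => (if h : m < n then ((x ⟨m, h⟩).im : ℝ) else 0) * (c:ℝ)^(n - 1 - m)
      with hgdef
    have hreal : ∑ j ∈ Finset.range n, (d j : ℝ) * (c:ℝ)^j = 0 := by
      have h1 : ∀ j ∈ Finset.range n, (d j : ℝ) * (c:ℝ)^j = g (n - 1 - j) := by
        intro j hj
        rw [Finset.mem_range] at hj
        rw [hgdef, hd]
        simp only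
        rw [dif_pos hj, dif_pos (by omega : n - 1 - j < n)]
        rw [show n - 1 - (n - 1 - j) = j from by omega]
      rw [Finset.sum_congr rfl h1, Finset.sum_range_reflect g n]
      have h2 : ∀ k : Fin n, g (k:ℕ) = ((x k).im : ℝ) * (c:ℝ)^(n - 1 - (k:ℕ)) := by
        intro k
        rw [hgdef]
        simp only
        rw [dif_pos k.isLt]
      rw [← Fin.sum_univ_eq_sum_range g n, Finset.sum_congr rfl (fun k _ => h2 k)]
      exact hpowsum
    have hg0 : ∑ j ∈ Finset.range n, d j * c^j = 0 := by
      have : ((∑ j ∈ Finset.range n, d j * c^j : ℤ) : ℝ) = 0 := by push_cast; exact hreal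
      exact_mod_cast this
    have hc2 : (2:ℤ) ≤ |c| := by
      have : (2:ℝ) ≤ |(c:ℝ)| := by rw [hcabs]; linarith
      exact_mod_cast (by push_cast; exact this : ((2:ℤ):ℝ) ≤ ((|c|:ℤ):ℝ))
    have hdb : ∀ j, |d j| < |c| := by
      intro j
      by_cases h : j < n
      · rw [hd]
        simp only [dif_pos h]
        set k : Fin n := ⟨n - 1 - j, by omega⟩
        have h1 : |((x k).im : ℝ)| ≤ Complex.abs (toComplex (x k)) := by
          rw [show ((x k).im : ℝ) = (toComplex (x k)).im from intCast_im (x k)]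
          exact Complex.abs_im_le_norm _
        have h3 : |((x k).im : ℝ)| < |(c:ℝ)| := by
          rw [hcabs]
          have := hXle k
          linarith
        exact_mod_cast (by push_cast; exact h3 : ((|(x k).im| : ℤ) : ℝ) < ((|c| : ℤ) : ℝ))
      · rw [hd]
        simp only [dif_neg h, abs_zero]
        omega
    have hzero := digitsZero c hcZne n d hdb hg0
    intro k
    refine ⟨(x k).re, ?_⟩
    have hlt := k.isLt
    have hkim : (x k).im = 0 := by
      have h1 := hzero (n - 1 - (k:ℕ)) (by omega)
      rw [hd] at h1
      simp only [dif_pos (by omega : n - 1 - (k:ℕ) < n)] at h1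
      rwa [show (⟨n - 1 - (n - 1 - (k:ℕ)), by omega⟩ : Fin n) = k from Fin.ext (by simp; omega)] at h1
    rw [Zsqrtd.ext_iff]
    constructor
    · rw [Zsqrtd.re_intCast]
    · rw [Zsqrtd.im_intCast, hkim]

  · intro h
    choose m hm using h
    set M : ℤ := 2 * ∏ k, (3 * m k + 1) with hM
    have hyM : y = (M : GaussianInt) := by
      rw [hy, hM]; push_cast; simp [hm]
    refine ⟨(M : ℚ) + ∑ k, (m k : ℚ) / (M : ℚ) ^ ((k:ℕ)+1), ?_⟩
    rw [hyM]
    simp only [hm]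
    push_cast
    simp
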